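/- arXiv:1908.04467 — 5 statements merged into one kernel-verified Lean document; each statement's English description precedes it below -/
import Mathlib

section
/- For matrices B^c and B^d in R^{n×n} with zero diagonals, and any scalars α>0, β>0, the signed Laplacians satisfy α·L_{B^c} + β·L_{B^d} = L_{αB^c + βB^d} if and only if B^c and B^d are sign-consistent (i.e., b^c_{ij}·b^d_{ij} ≥ 0 for all i,j). -/
open Matrix BigOperators

/-- Signed Laplacian of a real matrix: diagonal entries are row sums of
absolute values of off-diagonal entries, off-diagonal entries are `-B i j`. -/
noncomputable def signedLaplacian {n : ℕ} (B : Matrix (Fin n) (Fin n) ℝ) :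
    Matrix (Fin n) (Fin n) ℝ :=
  Matrix.of fun i j => if i = j then ∑ k ∈ Finset.univ.erase i, |B i k| else -B i j

theorem stmt_0 {n : ℕ} (Bc Bd : Matrix (Fin n) (Fin n) ℝ)
    (hBc : ∀ i, Bc i i = 0) (hBd : ∀ i, Bd i i = 0)
    (α β : ℝ) (hα : 0 < α) (hβ : 0 < β) :
    α • signedLaplacian Bc + β • signedLaplacian Bd =
      signedLaplacian (α • Bc + β • Bd) ↔ ∀ i j, 0 ≤ Bc i j * Bd i j := by
  have key : ∀ a b : ℝ, |α * a + β * b| = α * |a| + β * |b| ↔ 0 ≤ a * b := by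
    intro a b
    constructor
    · intro h
      by_contra hab
      push_neg at hab
      rcases lt_or_ge 0 a with ha | ha
      · have hb : b < 0 := by nlinarith
        rw [abs_of_pos ha, abs_of_neg hb] at h
        rcases abs_cases (α * a + β * b) with ⟨h1, _⟩ | ⟨h1, _⟩ <;> nlinarith
      · have ha' : a < 0 := by
          rcases lt_or_eq_of_le ha with h' | h'
          · exact h'
          · subst h'; simp at hab
        have hb : 0 < b := by nlinarith
        rw [abs_of_neg ha', abs_of_pos hb] at h
        rcases abs_cases (α * a + β * b) with ⟨h1, _⟩ | ⟨h1, _⟩ <;> nlinarith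
    · intro h
      rcases lt_trichotomy a 0 with ha | ha | ha
      · have hb : b ≤ 0 := by nlinarith
        rw [abs_of_neg ha, abs_of_nonpos hb, abs_of_nonpos (by nlinarith)]
        ring
      · subst ha
        rw [mul_zero, zero_add, abs_mul, abs_of_pos hβ, abs_zero]
        ring
      · have hb : 0 ≤ b := by nlinarith
        rw [abs_of_pos ha, abs_of_nonneg hb, abs_of_nonneg (by positivity)]
  constructor
  · intro h i j
    by_cases hij : i = j
    · subst hij; simp [hBc, hBd]
    · have hd := congrFun (congrFun h i) i
      simp only [signedLaplacian, Matrix.add_apply, Matrix.smul_apply, Matrix.of_apply,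
        if_pos rfl, if_true, smul_eq_mul] at hd
      rw [Finset.mul_sum, Finset.mul_sum, ← Finset.sum_add_distrib] at hd
      have hle : ∀ k ∈ Finset.univ.erase i,
          |α * Bc i k + β * Bd i k| ≤ α * |Bc i k| + β * |Bd i k| := by
        intro k _
        calc |α * Bc i k + β * Bd i k| ≤ |α * Bc i k| + |β * Bd i k| := abs_add_le _ _
          _ = α * |Bc i k| + β * |Bd i k| := by
              rw [abs_mul, abs_mul, abs_of_pos hα, abs_of_pos hβ]
      have heq := (Finset.sum_eq_sum_iff_of_le hle).mp hd.symm j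
        (Finset.mem_erase.mpr ⟨Ne.symm hij, Finset.mem_univ j⟩)
      exact (key _ _).mp heq
  · intro h
    ext i j
    simp only [signedLaplacian, Matrix.add_apply, Matrix.smul_apply, Matrix.of_apply,
      smul_eq_mul]
    by_cases hij : i = j
    · simp only [if_pos hij]
      rw [Finset.mul_sum, Finset.mul_sum, ← Finset.sum_add_distrib]
      refine Finset.sum_congr rfl fun k _ => ?_
      exact ((key _ _).mpr (h i k)).symm
    · simp only [if_neg hij]
      ring
end

section
/- If a directed graph on vertices {0,1,...,n} contains a spanning tree rooted at vertex 0 (a directed path from 0 to every other vertex), then its Laplacian matrix L has exactly one zero eigenvalue and all its other eigenvalues have positive real part. -/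
open Matrix BigOperators


lemma aux_mv {n : ℕ} (A : Matrix (Fin (n + 1)) (Fin (n + 1)) ℝ)
    (x : Fin (n + 1) → ℂ) (i : Fin (n + 1)) :
    (((Matrix.of fun i j =>
      if i = j then ∑ k ∈ Finset.univ.erase i, A i k else -A i j : Matrix _ _ ℝ).map
        Complex.ofReal).mulVec x) i
      = ((∑ k ∈ Finset.univ.erase i, A i k : ℝ) : ℂ) * x i
        - ∑ j ∈ Finset.univ.erase i, (A i j : ℂ) * x j := by
  simp only [Matrix.mulVec, dotProduct, Matrix.map_apply, Matrix.of_apply]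
  rw [← Finset.add_sum_erase Finset.univ _ (Finset.mem_univ i), if_pos rfl]
  rw [sub_eq_add_neg, ← Finset.sum_neg_distrib]
  congr 1
  apply Finset.sum_congr rfl
  intro j hj
  rw [if_neg (Finset.ne_of_mem_erase hj).symm]  -- i = j false
  push_cast
  ring

lemma aux_step {n : ℕ} (A : Matrix (Fin (n + 1)) (Fin (n + 1)) ℝ)
    (hA : ∀ i j, 0 ≤ A i j) (x : Fin (n + 1) → ℂ)
    (i j : Fin (n + 1))
    (heq : ((∑ k ∈ Finset.univ.erase i, A i k : ℝ) : ℂ) * x i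
        = ∑ k ∈ Finset.univ.erase i, (A i k : ℂ) * x k)
    (hmax : ∀ k, ‖x k‖ ≤ ‖x i‖)
    (hij : A i j ≠ 0) (hji : j ≠ i) : x j = x i := by
  set M2 : ℝ := Complex.normSq (x i) with hM2
  have hterm : ∀ k, ((starRingEnd ℂ) (x i) * x k).re ≤ M2 := by
    intro k
    calc ((starRingEnd ℂ) (x i) * x k).re ≤ ‖(starRingEnd ℂ) (x i) * x k‖ :=
          Complex.re_le_norm _
      _ = ‖x i‖ * ‖x k‖ := by
          rw [norm_mul, Complex.norm_conj]
      _ ≤ ‖x i‖ * ‖x i‖ :=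
          mul_le_mul_of_nonneg_left (hmax k) (norm_nonneg _)
      _ = M2 := by rw [hM2, ← Complex.sq_norm, sq]
  have key : ∑ k ∈ Finset.univ.erase i, A i k * (M2 - ((starRingEnd ℂ) (x i) * x k).re) = 0 := by
    have h1 : ((starRingEnd ℂ) (x i) * (((∑ k ∈ Finset.univ.erase i, A i k : ℝ) : ℂ) * x i)).re
        = (∑ k ∈ Finset.univ.erase i, A i k) * M2 := by
      simp [hM2, Complex.mul_re, Complex.normSq_apply]
      ring
    have h2 : ((starRingEnd ℂ) (x i) * (∑ k ∈ Finset.univ.erase i, (A i k : ℂ) * x k)).re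
        = ∑ k ∈ Finset.univ.erase i, A i k * ((starRingEnd ℂ) (x i) * x k).re := by
      rw [Finset.mul_sum, Complex.re_sum]
      apply Finset.sum_congr rfl
      intro k _
      have h3 : (starRingEnd ℂ) (x i) * ((A i k : ℂ) * x k)
          = (A i k : ℂ) * ((starRingEnd ℂ) (x i) * x k) := by ring
      rw [h3]
      simp [Complex.mul_re]
    have h4 := congrArg Complex.re (congrArg ((starRingEnd ℂ) (x i) * ·) heq)
    rw [h1, h2] at h4
    have : ∑ k ∈ Finset.univ.erase i, A i k * (M2 - ((starRingEnd ℂ) (x i) * x k).re)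
        = (∑ k ∈ Finset.univ.erase i, A i k) * M2
          - ∑ k ∈ Finset.univ.erase i, A i k * ((starRingEnd ℂ) (x i) * x k).re := by
      rw [Finset.sum_mul]
      rw [← Finset.sum_sub_distrib]
      apply Finset.sum_congr rfl
      intro k _; ring
    rw [this, h4, sub_self]
  -- each summand is zero
  have hzero := (Finset.sum_eq_zero_iff_of_nonneg ?_).mp key j (Finset.mem_erase.mpr ⟨hji, Finset.mem_univ j⟩)
  swap
  · intro k _
    have := hterm k
    have := hA i k
    have h5 : 0 ≤ M2 - ((starRingEnd ℂ) (x i) * x k).re := by linarith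
    exact mul_nonneg (hA i k) h5
  · have hre : ((starRingEnd ℂ) (x i) * x j).re = M2 := by
      rcases mul_eq_zero.mp hzero with h | h
      · exact absurd h hij
      · linarith [sub_eq_zero.mp h]  -- h : M2 - re = 0
    -- conclude x j = x i
    have hns : Complex.normSq (x j - x i) = 0 := by
      have hle : Complex.normSq (x j) ≤ M2 := by
        rw [hM2]
        have := hmax j
        simp only [← Complex.sq_norm]
        nlinarith [norm_nonneg (x j), norm_nonneg (x i)]
      have hexp : Complex.normSq (x j - x i)
          = Complex.normSq (x j) + M2 - 2 * ((starRingEnd ℂ) (x i) * x j).re := by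
        simp [Complex.normSq_apply, Complex.mul_re, Complex.sub_re, Complex.sub_im, hM2]
        ring
      rw [hexp, hre]
      have := Complex.normSq_nonneg (x j - x i)
      nlinarith
    exact sub_eq_zero.mp (Complex.normSq_eq_zero.mp hns)

lemma aux_ker {n : ℕ} (A : Matrix (Fin (n + 1)) (Fin (n + 1)) ℝ)
    (hA : ∀ i j, 0 ≤ A i j)
    (htree : ∀ i : Fin (n + 1),
      Relation.ReflTransGen (fun u v : Fin (n + 1) => A v u ≠ 0) 0 i)
    (x : Fin (n + 1) → ℂ)
    (hx : ((Matrix.of fun i j =>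
      if i = j then ∑ k ∈ Finset.univ.erase i, A i k else -A i j : Matrix _ _ ℝ).map
        Complex.ofReal).mulVec x = 0) :
    ∀ i, x i = x 0 := by
  set y : Fin (n + 1) → ℂ := fun k => x k - x 0 with hy
  have hyeq : ∀ i, ((∑ k ∈ Finset.univ.erase i, A i k : ℝ) : ℂ) * y i
      = ∑ k ∈ Finset.univ.erase i, (A i k : ℂ) * y k := by
    intro i
    have h1 := aux_mv A x i
    rw [hx] at h1
    have h2 : ∑ k ∈ Finset.univ.erase i, (A i k : ℂ) * y k
        = ∑ k ∈ Finset.univ.erase i, (A i k : ℂ) * x k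
          - (∑ k ∈ Finset.univ.erase i, (A i k : ℂ)) * x 0 := by
      rw [Finset.sum_mul, ← Finset.sum_sub_distrib]
      exact Finset.sum_congr rfl fun k _ => by simp [hy]; ring
    rw [h2]
    have h3 : ((∑ k ∈ Finset.univ.erase i, A i k : ℝ) : ℂ)
        = ∑ k ∈ Finset.univ.erase i, (A i k : ℂ) := by push_cast; rfl
    simp only [Pi.zero_apply] at h1
    have h4 : ((∑ k ∈ Finset.univ.erase i, A i k : ℝ) : ℂ) * x i
        = ∑ k ∈ Finset.univ.erase i, (A i k : ℂ) * x k := by linear_combination -h1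
    rw [hy]
    simp only []
    rw [mul_sub, h4, h3]
  -- find max modulus index
  obtain ⟨j₀, -, hj₀⟩ := Finset.exists_max_image Finset.univ (fun k => ‖y k‖)
    ⟨0, Finset.mem_univ 0⟩
  have hmax : ∀ k, ‖y k‖ ≤ ‖y j₀‖ := fun k => hj₀ k (Finset.mem_univ k)
  -- walk back from j₀ to 0
  have hwalk : ∀ v : Fin (n + 1), Relation.ReflTransGen (fun u v => A v u ≠ 0) 0 v →
      y v = y j₀ → y 0 = y j₀ := by
    intro v hv
    induction hv with
    | refl => exact fun h => h
    | tail hab hbc ih =>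
      rename_i b c
      intro hc
      by_cases hbceq : b = c
      · exact ih (hbceq ▸ hc)
      · have hmax' : ∀ k, ‖y k‖ ≤ ‖y c‖ := by
          intro k; rw [hc]; exact hmax k
        have := aux_step A hA y c b (hyeq c) hmax' hbc hbceq
        exact ih (this.trans hc)
  have h0 : y 0 = y j₀ := hwalk j₀ (htree j₀) rfl
  have hy0 : y 0 = 0 := by simp [hy]
  have : ∀ k, y k = 0 := by
    intro k
    have := hmax k
    rw [← h0, hy0] at this
    simpa using norm_eq_zero.mp (le_antisymm (by simpa using this) (norm_nonneg _))
  intro i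
  have h6 := this i
  rw [hy] at h6
  simp only [] at h6
  exact sub_eq_zero.mp h6

lemma aux_ker2 {n : ℕ} (A : Matrix (Fin (n + 1)) (Fin (n + 1)) ℝ)
    (hA : ∀ i j, 0 ≤ A i j)
    (htree : ∀ i : Fin (n + 1),
      Relation.ReflTransGen (fun u v : Fin (n + 1) => A v u ≠ 0) 0 i)
    (x : Fin (n + 1) → ℂ)
    (hx : ((Matrix.of fun i j =>
      if i = j then ∑ k ∈ Finset.univ.erase i, A i k else -A i j : Matrix _ _ ℝ).map
        Complex.ofReal).mulVec (((Matrix.of fun i j =>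
      if i = j then ∑ k ∈ Finset.univ.erase i, A i k else -A i j : Matrix _ _ ℝ).map
        Complex.ofReal).mulVec x) = 0) :
    ((Matrix.of fun i j =>
      if i = j then ∑ k ∈ Finset.univ.erase i, A i k else -A i j : Matrix _ _ ℝ).map
        Complex.ofReal).mulVec x = 0 := by
  set Lc := ((Matrix.of fun i j =>
      if i = j then ∑ k ∈ Finset.univ.erase i, A i k else -A i j : Matrix _ _ ℝ).map
        Complex.ofReal) with hLc
  have hconst := aux_ker A hA htree (Lc.mulVec x) hx
  set c : ℂ := (Lc.mulVec x) 0 with hc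
  -- suppose c ≠ 0, derive contradiction
  by_cases hc0 : c = 0
  · funext k
    rw [hconst k, hc0]; rfl
  · exfalso
    set w : Fin (n + 1) → ℝ := fun k => ((starRingEnd ℂ) c * x k).re with hw
    -- the real equation at each index
    have hweq : ∀ i, (∑ k ∈ Finset.univ.erase i, A i k) * w i
        - ∑ k ∈ Finset.univ.erase i, A i k * w k = Complex.normSq c := by
      intro i
      have h1 := aux_mv A x i
      rw [← hLc] at h1
      rw [hconst i] at h1
      -- h1 : c = d_i * x i - ∑ A i k * x k
      have h2 := congrArg Complex.re (congrArg ((starRingEnd ℂ) c * ·) h1)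
      have hlhs : ((starRingEnd ℂ) c * c).re = Complex.normSq c := by
        simp [Complex.mul_re, Complex.normSq_apply]
      rw [hlhs] at h2
      rw [h2, mul_sub]
      congr 1
      · have : (starRingEnd ℂ) c * (((∑ k ∈ Finset.univ.erase i, A i k : ℝ) : ℂ) * x i)
            = ((∑ k ∈ Finset.univ.erase i, A i k : ℝ) : ℂ) * ((starRingEnd ℂ) c * x i) := by ring
        rw [this]
        simp [Complex.mul_re, hw]
      · rw [Finset.mul_sum, Complex.re_sum]
        apply Finset.sum_congr rfl
        intro k _
        have : (starRingEnd ℂ) c * ((A i k : ℂ) * x k)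
            = (A i k : ℂ) * ((starRingEnd ℂ) c * x k) := by ring
        rw [this]
        simp [Complex.mul_re, hw]
    -- take argmin of w
    obtain ⟨i₀, -, hi₀⟩ := Finset.exists_min_image Finset.univ w ⟨0, Finset.mem_univ 0⟩
    have hle : ∑ k ∈ Finset.univ.erase i₀, A i₀ k * w i₀
        ≤ ∑ k ∈ Finset.univ.erase i₀, A i₀ k * w k :=
      Finset.sum_le_sum fun k _ =>
        mul_le_mul_of_nonneg_left (hi₀ k (Finset.mem_univ k)) (hA i₀ k)
    have h3 := hweq i₀
    rw [← Finset.sum_mul] at hle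
    have h4 : 0 < Complex.normSq c := Complex.normSq_pos.mpr hc0
    linarith

theorem stmt_9 {n : ℕ} (A : Matrix (Fin (n + 1)) (Fin (n + 1)) ℝ)
    (hA : ∀ i j, 0 ≤ A i j)
    -- spanning tree rooted at vertex 0: every vertex is reachable from 0 by a
    -- directed path (arc from u to v iff A v u ≠ 0, i.e. a_{vu} > 0)
    (htree : ∀ i : Fin (n + 1),
      Relation.ReflTransGen (fun u v : Fin (n + 1) => A v u ≠ 0) 0 i)
    (L : Matrix (Fin (n + 1)) (Fin (n + 1)) ℝ)
    (hL : L = Matrix.of fun i j =>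
      if i = j then ∑ k ∈ Finset.univ.erase i, A i k else -A i j) :
    ((L.map Complex.ofReal).charpoly.rootMultiplicity 0 = 1) ∧
    (∀ μ ∈ spectrum ℂ (L.map Complex.ofReal), μ ≠ 0 → 0 < μ.re) := by
  subst hL
  set Lc := ((Matrix.of fun i j =>
      if i = j then ∑ k ∈ Finset.univ.erase i, A i k else -A i j : Matrix _ _ ℝ).map
        Complex.ofReal) with hLc
  -- row sums of Lc are zero
  have hone : Lc.mulVec (fun _ => (1 : ℂ)) = 0 := by
    funext i
    rw [hLc, aux_mv A]
    push_cast
    simp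
  set φ : Module.End ℂ (Fin (n + 1) → ℂ) := Matrix.toLin' Lc with hφ
  have hφa : ∀ v, φ v = Lc.mulVec v := fun v => Matrix.toLin'_apply Lc v
  -- powers of φ: kernel stabilizes
  have hpow : ∀ (k : ℕ) (m : Fin (n + 1) → ℂ), (φ ^ k) m = 0 → φ m = 0 := by
    intro k
    induction k with
    | zero => intro m hm; simp only [pow_zero, Module.End.one_apply] at hm; rw [hm]; simp
    | succ k ih =>
      intro m hm
      rw [pow_succ, Module.End.mul_apply] at hm
      have h1 : φ (φ m) = 0 := ih (φ m) hm
      rw [hφa, hφa] at h1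
      rw [hφa]
      exact aux_ker2 A hA htree m h1
  -- kernel description
  have hker : ∀ m : Fin (n + 1) → ℂ, φ m = 0 → m = m 0 • (fun _ => (1 : ℂ)) := by
    intro m hm
    rw [hφa] at hm
    have := aux_ker A hA htree m hm
    funext k
    simp [this k]
  have hmge : φ.maxGenEigenspace 0 = Submodule.span ℂ {(fun _ => (1 : ℂ))} := by
    ext m
    rw [Module.End.mem_maxGenEigenspace]
    simp only [zero_smul, sub_zero]
    constructor
    · rintro ⟨k, hk⟩
      exact Submodule.mem_span_singleton.mpr ⟨m 0, (hker m (hpow k m hk)).symm⟩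
    · rintro hm
      obtain ⟨a, rfl⟩ := Submodule.mem_span_singleton.mp hm
      exact ⟨1, by rw [pow_one, _root_.map_smul, hφa, hone, smul_zero]⟩
  -- charpoly of matrix = charpoly of φ
  have hcp : Lc.charpoly = φ.charpoly := by
    rw [← LinearMap.charpoly_toMatrix φ (Pi.basisFun ℂ (Fin (n + 1))),
      LinearMap.toMatrix_eq_toMatrix', hφ, LinearMap.toMatrix'_toLin']
  constructor
  · rw [Polynomial.rootMultiplicity_eq_natTrailingDegree', hcp,
      ← LinearMap.finrank_maxGenEigenspace_zero_eq, hmge]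
    apply finrank_span_singleton
    intro h
    have := congrFun h 0
    simp at this
  · intro μ hμ hμ0
    -- eigenvalue via toLin'
    have hsp : spectrum ℂ φ = spectrum ℂ Lc := by
      have h1 : φ = Matrix.toLinAlgEquiv' Lc := by
        apply LinearMap.ext
        intro v
        rw [hφa, Matrix.toLinAlgEquiv'_apply]
      rw [h1]
      exact AlgEquiv.spectrum_eq Matrix.toLinAlgEquiv' Lc
    have heig : Module.End.HasEigenvalue φ μ := by
      rw [Module.End.hasEigenvalue_iff_mem_spectrum, hsp]
      exact hμ
    obtain ⟨k, hk⟩ := eigenvalue_mem_ball heig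
    set d : ℝ := ∑ j ∈ Finset.univ.erase k, A k j with hd
    have hd0 : 0 ≤ d := Finset.sum_nonneg fun j _ => hA k j
    have hdiag : Lc k k = (d : ℂ) := by
      simp [hLc, Matrix.map_apply, hd]
    have hrad : ∑ j ∈ Finset.univ.erase k, ‖Lc k j‖ = d := by
      rw [hd]
      apply Finset.sum_congr rfl
      intro j hj
      have hne : k ≠ j := (Finset.ne_of_mem_erase hj).symm
      simp [hLc, Matrix.map_apply, hne, abs_of_nonneg (hA k j)]
    rw [hdiag, hrad, Metric.mem_closedBall] at hk
    have hk2 : ‖μ - (d : ℂ)‖ ≤ d := by rwa [Complex.dist_eq] at hk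
    have hk4 : (μ.re - d) ^ 2 + μ.im ^ 2 ≤ d ^ 2 := by
      have h5 : ‖μ - (d : ℂ)‖ ^ 2 ≤ d ^ 2 := by nlinarith [norm_nonneg (μ - (d : ℂ))]
      rw [Complex.sq_norm, Complex.normSq_apply] at h5
      simp only [Complex.sub_re, Complex.sub_im, Complex.ofReal_re, Complex.ofReal_im,
        sub_zero] at h5
      nlinarith [h5]
    have hpos : 0 < μ.re ^ 2 + μ.im ^ 2 := by
      have := Complex.normSq_pos.mpr hμ0
      rw [Complex.normSq_apply] at this
      nlinarith
    nlinarith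
end

section
/- Let B^c, B^d ∈ R^{n×n} (zero diagonals) be sign-inconsistent and suppose the union digraph G(B^c) ∪ G(B^d) is strongly connected. Then the matrix L_{B^{c+}+B^{d+}} + Δ_{|B^{c-}+B^{d-}|} is a nonsingular M-matrix; in particular, it is positive stable and its inverse is entrywise nonnegative. -/
open Matrix BigOperators

noncomputable def entPos {n : ℕ} (B : Matrix (Fin n) (Fin n) ℝ) :
    Matrix (Fin n) (Fin n) ℝ := Matrix.of fun i j => max (B i j) 0

noncomputable def entNeg {n : ℕ} (B : Matrix (Fin n) (Fin n) ℝ) :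
    Matrix (Fin n) (Fin n) ℝ := Matrix.of fun i j => min (B i j) 0

noncomputable def rowSumDiag {n : ℕ} (A : Matrix (Fin n) (Fin n) ℝ) :
    Matrix (Fin n) (Fin n) ℝ := Matrix.diagonal fun i => ∑ j, A i j

def PosStable {n : ℕ} (A : Matrix (Fin n) (Fin n) ℝ) : Prop :=
  ∀ μ ∈ spectrum ℂ (A.map Complex.ofReal), 0 < μ.re

/-- Strong connectivity of the union digraph of `G(Bc)` and `G(Bd)`:
there is an arc from `j` to `i` iff `Bc i j ≠ 0` or `Bd i j ≠ 0`, and every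
vertex is reachable from every other vertex by a directed path. -/
def UnionStronglyConnected {n : ℕ} (Bc Bd : Matrix (Fin n) (Fin n) ℝ) : Prop :=
  ∀ u v : Fin n,
    Relation.ReflTransGen (fun j i : Fin n => Bc i j ≠ 0 ∨ Bd i j ≠ 0) u v

theorem stmt_10 {n : ℕ} (Bc Bd : Matrix (Fin n) (Fin n) ℝ)
    (hBc : ∀ i, Bc i i = 0) (hBd : ∀ i, Bd i i = 0)
    (hsi : ∃ i j, Bc i j * Bd i j < 0)
    (hconn : UnionStronglyConnected Bc Bd)
    (M : Matrix (Fin n) (Fin n) ℝ)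
    (hM : M = signedLaplacian (entPos Bc + entPos Bd)
      + rowSumDiag (Matrix.of fun i j => |(entNeg Bc + entNeg Bd) i j|)) :
    (∀ i j, i ≠ j → M i j ≤ 0) ∧ PosStable M ∧ IsUnit M.det ∧ ∀ i j, 0 ≤ M⁻¹ i j := by
  classical
  set A : Matrix (Fin n) (Fin n) ℝ := fun i j => max (Bc i j) 0 + max (Bd i j) 0 with hAdef
  set d : Fin n → ℝ := fun i => ∑ j, |min (Bc i j) 0 + min (Bd i j) 0| with hddef
  have hA0 : ∀ i j, 0 ≤ A i j := by
    intro i j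
    have := le_max_right (Bc i j) 0
    have := le_max_right (Bd i j) 0
    simp only [hAdef]; linarith
  have hd0 : ∀ i, 0 ≤ d i := fun i => Finset.sum_nonneg fun j _ => abs_nonneg _
  have hAd : ∀ i, A i i = 0 := by
    intro i; simp [hAdef, hBc i, hBd i]
  -- entrywise description of M
  have hMe : ∀ i k, M i k = if i = k then ((∑ l, A i l) + d i) else -A i k := by
    intro i k
    subst hM
    by_cases h : i = k
    · subst h
      have key : ∀ l, |entPos Bc i l + entPos Bd i l| = A i l := by
        intro l
        have he : entPos Bc i l + entPos Bd i l = A i l := by simp [entPos, hAdef]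
        rw [he, abs_of_nonneg (hA0 i l)]
      have key2 : ∑ l ∈ Finset.univ.erase i, |entPos Bc i l + entPos Bd i l| = ∑ l, A i l := by
        rw [Finset.sum_congr rfl fun l _ => key l]
        have h3 := Finset.add_sum_erase Finset.univ (fun l => A i l) (Finset.mem_univ i)
        rw [← h3]
        simp [hBc i, hBd i, hAd i]
      simp only [Matrix.add_apply, signedLaplacian, rowSumDiag, Matrix.of_apply,
        Matrix.diagonal_apply_eq, if_pos rfl, eq_self_iff_true, if_true]
      rw [key2]
      congr 1
    · simp only [Matrix.add_apply, signedLaplacian, rowSumDiag, Matrix.of_apply, if_neg h,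
        Matrix.diagonal_apply_ne _ h, add_zero]
      simp [entPos, Matrix.add_apply, hAdef]
  -- key fact: if row p has zero `d`, any arc into p comes from A
  have hkey : ∀ p k, d p = 0 → (Bc p k ≠ 0 ∨ Bd p k ≠ 0) → 0 < A p k := by
    intro p k hdp harc
    have h1 : |min (Bc p k) 0 + min (Bd p k) 0| = 0 :=
      (Finset.sum_eq_zero_iff_of_nonneg fun j _ => abs_nonneg _).mp hdp k (Finset.mem_univ k)
    have h1' : min (Bc p k) 0 + min (Bd p k) 0 = 0 := abs_eq_zero.mp h1
    have hmc : min (Bc p k) 0 ≤ 0 := min_le_right _ _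
    have hmd : min (Bd p k) 0 ≤ 0 := min_le_right _ _
    have hc0 : min (Bc p k) 0 = 0 := by linarith
    have hd0' : min (Bd p k) 0 = 0 := by linarith
    have hbc : 0 ≤ Bc p k := min_eq_right_iff.mp hc0
    have hbd : 0 ≤ Bd p k := min_eq_right_iff.mp hd0'
    rcases harc with h | h
    · have : 0 < Bc p k := lt_of_le_of_ne hbc (Ne.symm h)
      have : 0 < max (Bc p k) 0 := lt_max_iff.mpr (Or.inl this)
      have := le_max_right (Bd p k) 0
      simp only [hAdef]; linarith
    · have : 0 < Bd p k := lt_of_le_of_ne hbd (Ne.symm h)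
      have : 0 < max (Bd p k) 0 := lt_max_iff.mpr (Or.inl this)
      have := le_max_right (Bc p k) 0
      simp only [hAdef]; linarith
  -- some row has positive d
  have hdpos : ∃ p, 0 < d p := by
    obtain ⟨i, j, hij⟩ := hsi
    refine ⟨i, ?_⟩
    have hterm : 0 < |min (Bc i j) 0 + min (Bd i j) 0| := by
      rcases mul_neg_iff.mp hij with ⟨h1, h2⟩ | ⟨h1, h2⟩
      · have : min (Bc i j) 0 = 0 := min_eq_right h1.le
        have h2' : min (Bd i j) 0 = Bd i j := min_eq_left h2.le
        rw [abs_pos]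
        intro hcon; rw [this, h2', zero_add] at hcon; exact absurd hcon h2.ne
      · have : min (Bd i j) 0 = 0 := min_eq_right h2.le
        have h1' : min (Bc i j) 0 = Bc i j := min_eq_left h1.le
        rw [abs_pos]
        intro hcon; rw [this, h1', add_zero] at hcon; exact absurd hcon h1.ne
    exact Finset.sum_pos' (fun j _ => abs_nonneg _) ⟨j, Finset.mem_univ j, hterm⟩
  -- propagation lemma
  have hprop : ∀ (x : Fin n → ℝ) (m : ℝ), m ≠ 0 →
      (∀ p, x p = m → d p = 0 ∧ ∀ k, 0 < A p k → x k = m) → (∃ p, x p = m) → False := by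
    intro x m _ hclo ⟨p0, hp0⟩
    obtain ⟨q, hq⟩ := hdpos
    have hall : ∀ u (h : Relation.ReflTransGen
        (fun j i : Fin n => Bc i j ≠ 0 ∨ Bd i j ≠ 0) u p0), x u = m := by
      intro u h
      induction h using Relation.ReflTransGen.head_induction_on with
      | refl => exact hp0
      | head h' _ ih =>
        obtain ⟨hdc, hcl⟩ := hclo _ ih
        exact hcl _ (hkey _ _ hdc h')
    have hxq : x q = m := hall q (hconn q p0)
    exact absurd (hclo q hxq).1 (ne_of_gt hq)
  -- positivity lemma: solutions of M x = b with b ≥ 0 are nonnegative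
  have hpos : ∀ (b : Fin n → ℝ), (∀ i, 0 ≤ b i) → ∀ x, M *ᵥ x = b → ∀ i, 0 ≤ x i := by
    intro b hb x hx i0
    by_contra hneg
    push_neg at hneg
    obtain ⟨i, -, hi⟩ := Finset.exists_min_image Finset.univ x ⟨i0, Finset.mem_univ i0⟩
    have hi' : ∀ k, x i ≤ x k := fun k => hi k (Finset.mem_univ k)
    set m := x i with hmdef
    have hm : m < 0 := lt_of_le_of_lt (hi' i0) hneg
    refine hprop x m (ne_of_lt hm) ?_ ⟨i, rfl⟩
    intro p hp
    have hrow : ∑ k, M p k * x k = b p := by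
      have := congrFun hx p
      simpa [Matrix.mulVec, dotProduct] using this
    have hsplit : ∑ k, M p k * x k = ((∑ l, A p l) + d p) * m - ∑ k, A p k * x k := by
      have h1 : ∀ k, M p k * x k =
          (if k = p then ((∑ l, A p l) + d p) * m else 0) - A p k * x k := by
        intro k
        by_cases hk : k = p
        · subst hk
          rw [hMe k k, if_pos rfl, if_pos rfl, hp, hAd k]
          ring
        · rw [hMe p k, if_neg (fun h => hk h.symm), if_neg hk]
          ring
      rw [Finset.sum_congr rfl fun k _ => h1 k, Finset.sum_sub_distrib,
        Finset.sum_ite_eq' Finset.univ p _, if_pos (Finset.mem_univ p)]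
    have heq : ∑ k, A p k * x k = (∑ l, A p l) * m + d p * m - b p := by
      rw [hsplit] at hrow; linarith
    have hge : (∑ l, A p l) * m ≤ ∑ k, A p k * x k := by
      rw [Finset.sum_mul]
      exact Finset.sum_le_sum fun k _ => mul_le_mul_of_nonneg_left (hi' k) (hA0 p k)
    have hdm : 0 ≤ d p * m - b p := by linarith
    have hdm2 : d p * m ≤ 0 := mul_nonpos_of_nonneg_of_nonpos (hd0 p) hm.le
    have hbp : b p = 0 := le_antisymm (by linarith) (hb p)
    have hdpm : d p * m = 0 := by linarith
    have hdp0 : d p = 0 := by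
      rcases mul_eq_zero.mp hdpm with h | h
      · exact h
      · exact absurd h (ne_of_lt hm)
    refine ⟨hdp0, ?_⟩
    have hsum0 : ∑ k, A p k * (x k - m) = 0 := by
      have : ∑ k, A p k * (x k - m) = (∑ k, A p k * x k) - (∑ l, A p l) * m := by
        rw [Finset.sum_mul, ← Finset.sum_sub_distrib]
        exact Finset.sum_congr rfl fun k _ => by ring
      rw [this, heq, hdp0, hbp]; ring
    intro k hAk
    have hterm := (Finset.sum_eq_zero_iff_of_nonneg
      (fun k _ => mul_nonneg (hA0 p k) (by linarith [hi' k]))).mp hsum0 k (Finset.mem_univ k)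
    rcases mul_eq_zero.mp hterm with h | h
    · exact absurd h (ne_of_gt hAk)
    · linarith
  -- kernel is trivial
  have hker : ∀ x : Fin n → ℝ, M *ᵥ x = 0 → x = 0 := by
    intro x hx
    funext i
    have h1 := hpos 0 (fun _ => le_refl 0) x hx i
    have h2 := hpos 0 (fun _ => le_refl 0) (-x) (by rw [Matrix.mulVec_neg, hx, neg_zero]) i
    simp only [Pi.neg_apply, Pi.zero_apply] at h1 h2 ⊢
    linarith
  have hdet : M.det ≠ 0 := by
    intro h
    obtain ⟨v, hv0, hv⟩ := Matrix.exists_mulVec_eq_zero_iff.mpr h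
    exact hv0 (hker v hv)
  have hdetU : IsUnit M.det := isUnit_iff_ne_zero.mpr hdet
  -- positive stability
  have hPS : PosStable M := by
    intro μ hμ
    by_contra hre
    push_neg at hre
    rw [spectrum.mem_iff] at hμ
    have hdet' : ((algebraMap ℂ (Matrix (Fin n) (Fin n) ℂ)) μ - M.map Complex.ofReal).det = 0 := by
      by_contra h
      exact hμ (((Matrix.isUnit_iff_isUnit_det _)).mpr (isUnit_iff_ne_zero.mpr h))
    obtain ⟨v, hv0, hv⟩ := Matrix.exists_mulVec_eq_zero_iff.mpr hdet'
    have hvrow : ∀ p, μ * v p = ∑ k, (M p k : ℂ) * v k := by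
      intro p
      have h0 := congrFun hv p
      have hsub : ((algebraMap ℂ (Matrix (Fin n) (Fin n) ℂ)) μ - M.map Complex.ofReal) *ᵥ v
          = μ • v - (M.map Complex.ofReal) *ᵥ v := by
        rw [Matrix.sub_mulVec, Algebra.algebraMap_eq_smul_one, Matrix.smul_mulVec,
          Matrix.one_mulVec]
      rw [hsub] at h0
      have h0' : μ * v p - ∑ k, (M p k : ℂ) * v k = 0 := by
        simpa [Matrix.mulVec, dotProduct, Matrix.map_apply] using h0
      have := sub_eq_zero.mp h0'
      exact this
    obtain ⟨k0, hk0⟩ := Function.ne_iff.mp hv0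
    have hk0' : v k0 ≠ 0 := by simpa using hk0
    obtain ⟨i, -, hi⟩ := Finset.exists_max_image Finset.univ (fun k => ‖v k‖)
      ⟨k0, Finset.mem_univ k0⟩
    have hi' : ∀ k, ‖v k‖ ≤ ‖v i‖ := fun k => hi k (Finset.mem_univ k)
    set m := ‖v i‖ with hmdef
    have hm : 0 < m := lt_of_lt_of_le (norm_pos_iff.mpr hk0') (hi' k0)
    have hrowi : (μ - (M i i : ℂ)) * v i = -∑ k, (A i k : ℂ) * v k := by
      have h1 : ∀ k, (M i k : ℂ) * v k =
          (if k = i then (M i i : ℂ) * v i else 0) - (A i k : ℂ) * v k := by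
        intro k
        by_cases hk : k = i
        · subst hk
          rw [if_pos rfl, hAd k]
          push_cast
          ring
        · rw [hMe i k, if_neg (fun hh => hk hh.symm), if_neg hk]
          push_cast
          ring
      have h2 : ∑ k, (M i k : ℂ) * v k = (M i i : ℂ) * v i - ∑ k, (A i k : ℂ) * v k := by
        rw [Finset.sum_congr rfl fun k _ => h1 k, Finset.sum_sub_distrib,
          Finset.sum_ite_eq' Finset.univ i _, if_pos (Finset.mem_univ i)]
      have h3 := hvrow i
      rw [h2] at h3
      linear_combination h3
    have hMiiA : (∑ k, A i k) ≤ M i i := by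
      rw [hMe i i, if_pos rfl]
      linarith [hd0 i]
    have habs : ‖μ - (M i i : ℂ)‖ * m ≤ (M i i) * m := by
      calc ‖μ - (M i i : ℂ)‖ * m
          = ‖(μ - (M i i : ℂ)) * v i‖ := (norm_mul _ _).symm
        _ = ‖∑ k, (A i k : ℂ) * v k‖ := by rw [hrowi, norm_neg]
        _ ≤ ∑ k, ‖(A i k : ℂ) * v k‖ := norm_sum_le _ _
        _ = ∑ k, A i k * ‖v k‖ := by
            refine Finset.sum_congr rfl fun k _ => ?_
            rw [norm_mul, Complex.norm_real, Real.norm_eq_abs, abs_of_nonneg (hA0 i k)]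
        _ ≤ ∑ k, A i k * m := Finset.sum_le_sum fun k _ =>
            mul_le_mul_of_nonneg_left (hi' k) (hA0 i k)
        _ = (∑ k, A i k) * m := (Finset.sum_mul _ _ _).symm
        _ ≤ (M i i) * m := mul_le_mul_of_nonneg_right hMiiA hm.le
    have h3 : ‖μ - (M i i : ℂ)‖ ≤ M i i := le_of_mul_le_mul_right habs hm
    have hc : 0 ≤ M i i := by
      rw [hMe i i, if_pos rfl]
      have := Finset.sum_nonneg (fun k (_ : k ∈ Finset.univ) => hA0 i k)
      linarith [hd0 i]
    have h4 : (μ.re - M i i) ^ 2 + μ.im ^ 2 ≤ (M i i) ^ 2 := by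
      have hsq : ‖μ - (M i i : ℂ)‖ ^ 2 ≤ (M i i) ^ 2 := by
        nlinarith [norm_nonneg (μ - (M i i : ℂ))]
      rw [Complex.sq_norm, Complex.normSq_apply] at hsq
      simpa [Complex.sub_re, Complex.sub_im, Complex.ofReal_re, Complex.ofReal_im, pow_two]
        using hsq
    have hμre : μ.re = 0 := by nlinarith [mul_nonneg hc (neg_nonneg.mpr hre), sq_nonneg μ.im]
    have hμim : μ.im = 0 := by nlinarith
    have hμ0 : μ = 0 := Complex.ext hμre hμim
    rw [hμ0, map_zero, zero_sub, Matrix.det_neg] at hdet'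
    have hdM : (M.map Complex.ofReal).det = 0 := by
      rcases mul_eq_zero.mp hdet' with h | h
      · exact absurd h (pow_ne_zero _ (by norm_num))
      · exact h
    have hcoe : ((M.det : ℝ) : ℂ) = 0 := by
      have h5 := RingHom.map_det Complex.ofRealHom M
      rw [RingHom.mapMatrix_apply] at h5
      rw [show (M.map ⇑Complex.ofRealHom) = M.map Complex.ofReal from rfl, hdM] at h5
      simpa using h5
    exact hdet (by exact_mod_cast hcoe)
  refine ⟨?_, hPS, hdetU, ?_⟩
  · intro i j hij
    rw [hMe i j, if_neg hij]
    simpa using hA0 i j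
  · intro i j
    have hMinv := Matrix.mul_nonsing_inv M hdetU
    have hx : M *ᵥ (fun k => M⁻¹ k j) = fun p => if p = j then 1 else 0 := by
      funext p
      have h1 : (M * M⁻¹) p j = (1 : Matrix (Fin n) (Fin n) ℝ) p j := by rw [hMinv]
      simpa [Matrix.mul_apply, Matrix.mulVec, dotProduct, Matrix.one_apply] using h1
    exact hpos _ (fun p => by split <;> norm_num) _ hx i
end

section
/- Let L ∈ R^{n×n} be a matrix with zero row sums (L·1_n = 0) whose eigenvalue 0 is simple and all other eigenvalues have positive real part. With E = [-1_{n-1} I] ∈ R^{(n-1)×n} and F = [0; I] ∈ R^{n×(n-1)}, the reduced matrix E·L·F ∈ R^{(n-1)×(n-1)} is positive stable. -/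
open Matrix BigOperators

open Polynomial in
lemma aux_mem_spec_iff {m : Type*} [Fintype m] [DecidableEq m] (A : Matrix m m ℂ) (μ : ℂ) :
    μ ∈ spectrum ℂ A ↔ A.charpoly.IsRoot μ := by
  rw [spectrum.mem_iff, Polynomial.IsRoot, Matrix.charpoly, _root_.eval_det,
    Matrix.matPolyEquiv_charmatrix, Polynomial.eval_sub, Polynomial.eval_X, Polynomial.eval_C]
  have h : algebraMap ℂ (Matrix m m ℂ) μ = Matrix.scalar m μ := rfl
  rw [h, Matrix.isUnit_iff_isUnit_det, isUnit_iff_ne_zero, not_ne_iff]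

open Polynomial in
lemma aux_charpoly_conj {m : Type*} [Fintype m] [DecidableEq m] {R : Type*} [CommRing R]
    (S T A : Matrix m m R) (hST : S * T = 1) :
    (S * A * T).charpoly = A.charpoly := by
  have hone : S.map C * T.map C = 1 := by rw [← Matrix.map_mul, hST, Matrix.map_one _ C_0 C_1]
  have key : charmatrix (S * A * T) = S.map C * charmatrix A * T.map C := by
    unfold charmatrix
    rw [Matrix.mul_sub, Matrix.sub_mul]
    congr 1
    · rw [Matrix.mul_assoc, (Matrix.scalar_commute (X : R[X]) (fun r => mul_comm _ _)
        (T.map C)).eq, ← Matrix.mul_assoc, hone, Matrix.one_mul]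
    · simp only [RingHom.mapMatrix_apply]
      rw [Matrix.map_mul, Matrix.map_mul]
  rw [Matrix.charpoly, key, Matrix.det_mul, Matrix.det_mul, Matrix.charpoly]
  have hdet : (S.map C).det * (T.map C).det = 1 := by rw [← Matrix.det_mul, hone, Matrix.det_one]
  calc (S.map C).det * (charmatrix A).det * (T.map C).det
      = (charmatrix A).det * ((S.map C).det * (T.map C).det) := by ring
    _ = (charmatrix A).det := by rw [hdet, mul_one]

/-- The equiv `Fin 1 ⊕ Fin n ≃ Fin (n+1)` sending `inl` to `0` and `inr i` to `i.succ`. -/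
def auxEquiv (n : ℕ) : Fin 1 ⊕ Fin n ≃ Fin (n + 1) where
  toFun := Sum.elim (fun _ => 0) Fin.succ
  invFun := fun i => Fin.cases (Sum.inl 0) Sum.inr i
  left_inv := by
    rintro (x | x)
    · simp [Subsingleton.elim x 0]
    · simp
  right_inv := by intro i; induction i using Fin.cases <;> simp

lemma aux_map_mul {a b c : ℕ} (P : Matrix (Fin a) (Fin b) ℝ) (Q : Matrix (Fin b) (Fin c) ℝ) :
    (P * Q).map Complex.ofReal = P.map Complex.ofReal * Q.map Complex.ofReal := by
  ext i j
  simp [Matrix.mul_apply, Matrix.map_apply]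

open Polynomial in
lemma aux_charpoly_zero_one : (0 : Matrix (Fin 1) (Fin 1) ℂ).charpoly = X := by
  rw [Matrix.charpoly, Matrix.det_fin_one]
  simp [charmatrix_apply]

theorem stmt_14 {n : ℕ} (L : Matrix (Fin (n + 1)) (Fin (n + 1)) ℝ)
    (hrow : L *ᵥ (fun _ => (1 : ℝ)) = 0)
    (hsimple : (L.map Complex.ofReal).charpoly.rootMultiplicity 0 = 1)
    (hspec : ∀ μ ∈ spectrum ℂ (L.map Complex.ofReal), μ ≠ 0 → 0 < μ.re)
    (E : Matrix (Fin n) (Fin (n + 1)) ℝ)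
    (hE : E = Matrix.of fun i j => if j = 0 then -1 else if j = i.succ then 1 else 0)
    (F : Matrix (Fin (n + 1)) (Fin n) ℝ)
    (hF : F = Matrix.of fun i j => if i = j.succ then 1 else 0) :
    PosStable (E * L * F) := by
  classical
  set A : Matrix (Fin (n + 1)) (Fin (n + 1)) ℂ := L.map Complex.ofReal with hAdef
  set Mc : Matrix (Fin n) (Fin n) ℂ := (E * L * F).map Complex.ofReal with hMcdef
  -- complex versions of E and F
  set Ec : Matrix (Fin n) (Fin (n + 1)) ℂ := E.map Complex.ofReal with hEcdef
  set Fc : Matrix (Fin (n + 1)) (Fin n) ℂ := F.map Complex.ofReal with hFcdef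
  have hEc : ∀ i j, Ec i j = if j = 0 then -1 else if j = i.succ then 1 else 0 := by
    intro i j
    simp [hEcdef, hE, Matrix.map_apply, apply_ite Complex.ofReal]
  have hFc : ∀ i j, Fc i j = if i = j.succ then 1 else 0 := by
    intro i j
    simp [hFcdef, hF, Matrix.map_apply, apply_ite Complex.ofReal]
  -- the conjugating matrices
  set T : Matrix (Fin (n + 1)) (Fin (n + 1)) ℂ :=
    Matrix.of fun i j => Fin.cases 1 (fun j' => Fc i j') j with hTdef
  set S : Matrix (Fin (n + 1)) (Fin (n + 1)) ℂ :=
    Matrix.of fun i j => Fin.cases (if j = 0 then (1 : ℂ) else 0) (fun i' => Ec i' j) i with hSdef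
  have hT0 : ∀ k, T k 0 = 1 := fun k => rfl
  have hTs : ∀ k j, T k (Fin.succ j) = Fc k j := fun k j => rfl
  have hS0 : ∀ k, S 0 k = if k = 0 then 1 else 0 := fun k => rfl
  have hSs : ∀ i k, S (Fin.succ i) k = Ec i k := fun i k => rfl
  -- S * T = 1
  have hST : S * T = 1 := by
    ext i j
    induction i using Fin.cases with
    | zero =>
      rw [Matrix.mul_apply]
      simp only [hS0, ite_mul, one_mul, zero_mul, Finset.sum_ite_eq', Finset.mem_univ, if_true]
      induction j using Fin.cases with
      | zero => simp [hT0]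
      | succ j => simp [hTs, hFc, (Fin.succ_ne_zero j).symm, Matrix.one_apply,
          (Fin.succ_ne_zero j.succ).symm]
    | succ i =>
      rw [Matrix.mul_apply, Fin.sum_univ_succ]
      simp only [hSs, hEc, if_true, Fin.succ_ne_zero, if_false, Fin.succ_inj, ite_mul,
        one_mul, zero_mul, neg_mul, Finset.sum_ite_eq', Finset.mem_univ, if_true]
      induction j using Fin.cases with
      | zero => simp [hT0, Matrix.one_apply, Fin.succ_ne_zero]
      | succ j => simp [hTs, hFc, (Fin.succ_ne_zero j).symm, Matrix.one_apply, Fin.succ_inj]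
  set N : Matrix (Fin (n + 1)) (Fin (n + 1)) ℂ := S * A * T with hNdef
  -- N has zero first column
  have hA1 : ∀ l, ∑ k, A l k = 0 := by
    intro l
    have h := congrFun hrow l
    simp only [Matrix.mulVec, dotProduct, mul_one, Pi.zero_apply] at h
    simp [hAdef, Matrix.map_apply, ← Complex.ofReal_sum, h]
  have hNcol : ∀ i, N i 0 = 0 := by
    intro i
    rw [hNdef, Matrix.mul_apply]
    simp only [hT0, mul_one]
    rw [Finset.sum_congr rfl fun k _ => Matrix.mul_apply (M := S) (N := A)]
    rw [Finset.sum_comm]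
    simp only [← Finset.mul_sum]
    simp [hA1]
  -- the lower-right block of N is Mc
  have hNblock : ∀ i j, N (Fin.succ i) (Fin.succ j) = Mc i j := by
    intro i j
    have hMc : Mc = Ec * A * Fc := by
      rw [hMcdef, aux_map_mul, aux_map_mul, hEcdef, hAdef, hFcdef]
    rw [hNdef, hMc, Matrix.mul_apply, Matrix.mul_apply]
    refine Finset.sum_congr rfl fun k _ => ?_
    rw [hTs, Matrix.mul_apply, Matrix.mul_apply]
    congr 1
  -- block decomposition of N
  set B : Matrix (Fin 1) (Fin n) ℂ := Matrix.of fun _ j => N 0 (Fin.succ j) with hBdef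
  have hblock : Matrix.fromBlocks (0 : Matrix (Fin 1) (Fin 1) ℂ) B 0 Mc =
      Matrix.reindex (auxEquiv n).symm (auxEquiv n).symm N := by
    ext p q
    rcases p with p | p <;> rcases q with q | q
    · simp [auxEquiv, hNcol]
    · simp [auxEquiv, hBdef, Subsingleton.elim p 0]
    · simp [auxEquiv, hNcol]
    · simp [auxEquiv, hNblock]
  -- charpoly factorization
  have hchar : A.charpoly = Polynomial.X * Mc.charpoly := by
    have h1 : N.charpoly = A.charpoly := aux_charpoly_conj S T A hST
    have h2 : (Matrix.fromBlocks (0 : Matrix (Fin 1) (Fin 1) ℂ) B 0 Mc).charpoly =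
        N.charpoly := by
      rw [hblock, Matrix.charpoly_reindex]
    rw [← h1, ← h2, Matrix.charpoly_fromBlocks_zero₂₁, aux_charpoly_zero_one]
  -- root multiplicity bookkeeping
  have hMcne : Mc.charpoly ≠ 0 := Mc.charpoly_monic.ne_zero
  have hXrm : (Polynomial.X : Polynomial ℂ).rootMultiplicity 0 = 1 := by
    simpa using Polynomial.rootMultiplicity_X_sub_C_self (x := (0 : ℂ))
  have hrm : Mc.charpoly.rootMultiplicity 0 = 0 := by
    have h := hsimple
    rw [hchar, Polynomial.rootMultiplicity_mul
      (mul_ne_zero Polynomial.X_ne_zero hMcne), hXrm] at h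
    omega
  -- conclude
  intro μ hμ
  rw [← hMcdef] at hμ
  rw [aux_mem_spec_iff] at hμ
  have hμ0 : μ ≠ 0 := by
    rintro rfl
    rw [← Polynomial.rootMultiplicity_pos hMcne] at hμ
    omega
  have hroot : A.charpoly.IsRoot μ := by
    rw [hchar]
    simp [Polynomial.IsRoot] at hμ ⊢
    right
    exact hμ
  exact hspec μ ((aux_mem_spec_iff A μ).mpr hroot) hμ0
end

section
/- Let W ∈ R^{m×m} be symmetric positive definite, Ψ ∈ R^{m×m}, δ > 1, and k > λ_max(W)·λ_max(ΨΨᵀ)/(2(δ-1)). Then the symmetric block matrix [[I, k^{-1}ΨᵀW],[k^{-1}WΨ, 2k^{-1}(δ-1)W]] is positive definite. -/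
open Matrix

/-- The largest element of the real spectrum of a matrix. -/
noncomputable def maxEig {m : ℕ} (A : Matrix (Fin m) (Fin m) ℝ) : ℝ :=
  sSup (spectrum ℝ A)

lemma conj_quad {m : ℕ} (U : Matrix (Fin m) (Fin m) ℝ) (d : Fin m → ℝ) (x : Fin m → ℝ) :
    x ⬝ᵥ ((U * diagonal d * Uᵀ) *ᵥ x) = ∑ i, d i * ((Uᵀ *ᵥ x) i)^2 := by
  rw [← mulVec_mulVec, ← mulVec_mulVec, dotProduct_mulVec x U, ← mulVec_transpose]
  simp [dotProduct, mulVec_diagonal]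
  exact Finset.sum_congr rfl fun i _ => by ring

lemma spec_real {m : ℕ} (A : Matrix (Fin m) (Fin m) ℝ) (hA : A.IsHermitian) :
    A = (hA.eigenvectorUnitary : Matrix (Fin m) (Fin m) ℝ) * diagonal hA.eigenvalues *
      ((hA.eigenvectorUnitary : Matrix (Fin m) (Fin m) ℝ))ᵀ := by
  simpa [Matrix.star_eq_conjTranspose, conjTranspose_eq_transpose_of_trivial] using hA.spectral_theorem

lemma unit_mul_transpose {m : ℕ} (A : Matrix (Fin m) (Fin m) ℝ) (hA : A.IsHermitian) :
    (hA.eigenvectorUnitary : Matrix (Fin m) (Fin m) ℝ) *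
      ((hA.eigenvectorUnitary : Matrix (Fin m) (Fin m) ℝ))ᵀ = 1 := by
  have h := (Matrix.mem_unitaryGroup_iff).mp hA.eigenvectorUnitary.2
  rwa [Matrix.star_eq_conjTranspose, Matrix.conjTranspose_eq_transpose_of_trivial] at h

lemma transpose_mul_unit {m : ℕ} (A : Matrix (Fin m) (Fin m) ℝ) (hA : A.IsHermitian) :
    ((hA.eigenvectorUnitary : Matrix (Fin m) (Fin m) ℝ))ᵀ *
      (hA.eigenvectorUnitary : Matrix (Fin m) (Fin m) ℝ) = 1 := by
  have h := (Matrix.mem_unitaryGroup_iff').mp hA.eigenvectorUnitary.2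
  rwa [Matrix.star_eq_conjTranspose, Matrix.conjTranspose_eq_transpose_of_trivial] at h

lemma dot_self_nonneg {m : ℕ} (u : Fin m → ℝ) : 0 ≤ u ⬝ᵥ u :=
  Finset.sum_nonneg fun i _ => mul_self_nonneg _

lemma eig_le_max {m : ℕ} (A : Matrix (Fin m) (Fin m) ℝ) (hA : A.IsHermitian) (i : Fin m) :
    hA.eigenvalues i ≤ maxEig A :=
  le_csSup (A.finite_spectrum.bddAbove) (hA.eigenvalues_mem_spectrum_real i)

lemma dot_self_eq {m : ℕ} (A : Matrix (Fin m) (Fin m) ℝ) (hA : A.IsHermitian) (x : Fin m → ℝ) :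
    x ⬝ᵥ x = ∑ i, (((hA.eigenvectorUnitary : Matrix (Fin m) (Fin m) ℝ))ᵀ *ᵥ x) i ^ 2 := by
  have h := conj_quad (hA.eigenvectorUnitary : Matrix (Fin m) (Fin m) ℝ) (fun _ => 1) x
  simp only [diagonal_one, Matrix.mul_one, one_mul] at h
  rw [unit_mul_transpose A hA, one_mulVec] at h
  exact h

lemma quad_le {m : ℕ} (A : Matrix (Fin m) (Fin m) ℝ) (hA : A.IsHermitian) (x : Fin m → ℝ) :
    x ⬝ᵥ (A *ᵥ x) ≤ maxEig A * (x ⬝ᵥ x) := by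
  conv_lhs => rw [spec_real A hA, conj_quad]
  rw [dot_self_eq A hA x, Finset.mul_sum]
  exact Finset.sum_le_sum fun i _ =>
    mul_le_mul_of_nonneg_right (eig_le_max A hA i) (sq_nonneg _)

lemma sq_quad_le {m : ℕ} (W : Matrix (Fin m) (Fin m) ℝ) (hW : W.PosDef) (y : Fin m → ℝ) :
    y ⬝ᵥ ((W * W) *ᵥ y) ≤ maxEig W * (y ⬝ᵥ (W *ᵥ y)) := by
  have hH := hW.1
  set U := (hH.eigenvectorUnitary : Matrix (Fin m) (Fin m) ℝ) with hU
  have hWW : W * W = U * diagonal (fun i => hH.eigenvalues i * hH.eigenvalues i) * Uᵀ := by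
    conv_lhs => rw [spec_real W hH]
    rw [← diagonal_mul_diagonal]
    have : (U * diagonal hH.eigenvalues * Uᵀ) * (U * diagonal hH.eigenvalues * Uᵀ)
        = U * diagonal hH.eigenvalues * (Uᵀ * U) * diagonal hH.eigenvalues * Uᵀ := by
      noncomm_ring
    rw [this, transpose_mul_unit W hH, Matrix.mul_one]
    noncomm_ring
  have hR : y ⬝ᵥ (W *ᵥ y) = ∑ i, hH.eigenvalues i * ((Uᵀ *ᵥ y) i)^2 := by
    conv_lhs => rw [spec_real W hH]
    exact conj_quad U hH.eigenvalues y
  rw [hWW, conj_quad, hR, Finset.mul_sum]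
  refine Finset.sum_le_sum fun i _ => ?_
  have h1 : hH.eigenvalues i ≤ maxEig W := eig_le_max W hH i
  have h2 : 0 < hH.eigenvalues i := hW.eigenvalues_pos i
  nlinarith [mul_nonneg (mul_nonneg (sub_nonneg.mpr h1) h2.le) (sq_nonneg ((Uᵀ *ᵥ y) i))]

theorem stmt_17 {m : ℕ} (W : Matrix (Fin m) (Fin m) ℝ) (hW : W.PosDef)
    (Ψ : Matrix (Fin m) (Fin m) ℝ) (δ k : ℝ) (hδ : 1 < δ)
    (hk : maxEig W * maxEig (Ψ * Ψᵀ) / (2 * (δ - 1)) < k) :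
    (Matrix.fromBlocks 1 (k⁻¹ • (Ψᵀ * W)) (k⁻¹ • (W * Ψ))
      ((2 * k⁻¹ * (δ - 1)) • W)).PosDef := by
  rw [posDef_iff_dotProduct_mulVec]
  have hWT : Wᵀ = W := by
    have := hW.1
    rwa [IsHermitian, conjTranspose_eq_transpose_of_trivial] at this
  constructor
  · rw [IsHermitian, conjTranspose_eq_transpose_of_trivial, fromBlocks_transpose]
    simp [transpose_smul, transpose_mul, hWT]
  intro v hv
  set x : Fin m → ℝ := fun i => v (Sum.inl i) with hx
  set y : Fin m → ℝ := fun i => v (Sum.inr i) with hy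
  have hv' : v = Sum.elim x y := by funext i; cases i <;> rfl
  have hstar : star v = v := by funext i; simp
  rw [hstar, hv', fromBlocks_mulVec, sumElim_dotProduct_sumElim]
  simp only [Sum.elim_comp_inl, Sum.elim_comp_inr]
  -- cross term symmetry
  have hcross : y ⬝ᵥ ((W * Ψ) *ᵥ x) = x ⬝ᵥ ((Ψᵀ * W) *ᵥ y) := by
    rw [dotProduct_mulVec, ← mulVec_transpose, transpose_mul, hWT, dotProduct_comm]
  set a : Fin m → ℝ := (Ψᵀ * W) *ᵥ y with ha
  set q : ℝ := y ⬝ᵥ (W *ᵥ y) with hq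
  have hax : a ⬝ᵥ x = x ⬝ᵥ a := dotProduct_comm a x
  have hQ : x ⬝ᵥ (1 *ᵥ x + (k⁻¹ • (Ψᵀ * W)) *ᵥ y) +
      y ⬝ᵥ ((k⁻¹ • (W * Ψ)) *ᵥ x + ((2 * k⁻¹ * (δ - 1)) • W) *ᵥ y) =
      (x + k⁻¹ • a) ⬝ᵥ (x + k⁻¹ • a) - k⁻¹^2 * (a ⬝ᵥ a) + 2 * k⁻¹ * (δ - 1) * q := by
    simp only [one_mulVec, smul_mulVec, dotProduct_add, add_dotProduct,
      dotProduct_smul, smul_dotProduct, smul_eq_mul, hcross, hax, ← ha, ← hq]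
    ring
  rw [hQ]
  have hs : 0 ≤ (x + k⁻¹ • a) ⬝ᵥ (x + k⁻¹ • a) := dot_self_nonneg _
  by_cases hy0 : y = 0
  · have hx0 : x ≠ 0 := by
      intro h
      apply hv
      rw [hv', h, hy0]; funext i; cases i <;> rfl
    have : a = 0 := by rw [ha, hy0, mulVec_zero]
    have hq0 : q = 0 := by rw [hq, hy0]; simp
    rw [this, hq0]
    have hxx : 0 < x ⬝ᵥ x :=
      lt_of_le_of_ne (dot_self_nonneg x) fun h =>
        hx0 ((dotProduct_self_eq_zero).mp h.symm)
    simpa [hy0] using hxx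
  · -- y ≠ 0 case
    have hqpos : 0 < q := by
      have := hW.dotProduct_mulVec_pos hy0
      simpa [hq] using this
    obtain ⟨i, -⟩ := Function.ne_iff.mp hy0
    have hΨH : (Ψ * Ψᵀ).IsHermitian := by
      rw [IsHermitian, conjTranspose_eq_transpose_of_trivial, transpose_mul, transpose_transpose]
    have hΨPS : (Ψ * Ψᵀ).PosSemidef := by
      have := Matrix.posSemidef_self_mul_conjTranspose Ψ
      rwa [conjTranspose_eq_transpose_of_trivial] at this
    have hMΨ : 0 ≤ maxEig (Ψ * Ψᵀ) :=
      le_trans (hΨPS.eigenvalues_nonneg i) (eig_le_max _ hΨPS.1 i)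
    have hMW : 0 < maxEig W := lt_of_lt_of_le (hW.eigenvalues_pos i) (eig_le_max _ hW.1 i)
    have hkpos : 0 < k :=
      lt_of_le_of_lt (div_nonneg (mul_nonneg hMW.le hMΨ) (by linarith)) hk
    have hkey : maxEig W * maxEig (Ψ * Ψᵀ) < k * (2 * (δ - 1)) :=
      (div_lt_iff₀ (by linarith)).mp hk
    -- bound a ⬝ᵥ a
    set z : Fin m → ℝ := W *ᵥ y with hz
    have haz : a = Ψᵀ *ᵥ z := by rw [ha, hz, mulVec_mulVec]
    have haa : a ⬝ᵥ a = z ⬝ᵥ ((Ψ * Ψᵀ) *ᵥ z) := by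
      conv_lhs => rw [haz, dotProduct_mulVec, ← mulVec_transpose, transpose_transpose,
        mulVec_mulVec, dotProduct_comm]
    have hzz : z ⬝ᵥ z = y ⬝ᵥ ((W * W) *ᵥ y) := by
      conv_lhs => rw [hz, dotProduct_mulVec, ← mulVec_transpose, hWT, mulVec_mulVec,
        dotProduct_comm]
    have h1 : a ⬝ᵥ a ≤ maxEig (Ψ * Ψᵀ) * (z ⬝ᵥ z) := haa ▸ quad_le _ hΨH z
    have h2 : z ⬝ᵥ z ≤ maxEig W * q := hzz ▸ sq_quad_le W hW y
    have h3 : a ⬝ᵥ a ≤ maxEig (Ψ * Ψᵀ) * (maxEig W * q) :=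
      h1.trans (mul_le_mul_of_nonneg_left h2 hMΨ)
    have hki : 0 < k⁻¹ := inv_pos.mpr hkpos
    have hkki : k * k⁻¹ = 1 := mul_inv_cancel₀ hkpos.ne'
    have hk0 : k ≠ 0 := hkpos.ne'
    have t1 : k⁻¹ * k⁻¹ * (a ⬝ᵥ a) ≤ k⁻¹ * k⁻¹ * (maxEig (Ψ * Ψᵀ) * (maxEig W * q)) :=
      mul_le_mul_of_nonneg_left h3 (mul_pos hki hki).le
    have t2 : maxEig W * maxEig (Ψ * Ψᵀ) * (k⁻¹ * k⁻¹ * q) <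
        k * (2 * (δ - 1)) * (k⁻¹ * k⁻¹ * q) :=
      mul_lt_mul_of_pos_right hkey (mul_pos (mul_pos hki hki) hqpos)
    have h4 : k * (2 * (δ - 1)) * (k⁻¹ * k⁻¹ * q) = 2 * (δ - 1) * (k⁻¹ * q) := by
      field_simp
    nlinarith [hs, t1, t2, h4]
end
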